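/- Let G be a finite nilpotent group and A a finite G-module with A^G = 0. Then H¹(G,A) = 0. -/

import Mathlib

universe u v

/-- In a finite monoid, some positive power of any element is idempotent. -/
private theorem exists_pow_idem {M : Type*} [Monoid M] [Finite M] (φ : M) :
    ∃ s, 0 < s ∧ φ ^ s * φ ^ s = φ ^ s := by
  obtain ⟨i, j, hne, hij⟩ := Finite.exists_ne_map_eq_of_infinite (fun n : ℕ => φ ^ n)
  have key : ∀ i j : ℕ, i < j → φ ^ i = φ ^ j → ∃ s, 0 < s ∧ φ ^ s * φ ^ s = φ ^ s := by
    intro i j h e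
    set p := j - i with hp
    have hp1 : 0 < p := by omega
    have step : ∀ m, i ≤ m → φ ^ (m + p) = φ ^ m := by
      intro m hm
      have h1 : m + p = (m - i) + j := by omega
      have h2 : m = (m - i) + i := by omega
      rw [h1, pow_add, ← e, ← pow_add, ← h2]
    have steps : ∀ k m, i ≤ m → φ ^ (m + k * p) = φ ^ m := by
      intro k
      induction k with
      | zero => simp
      | succ k ihk =>
        intro m hm
        have h3 : m + (k + 1) * p = (m + p) + k * p := by ring
        rw [h3, ihk _ (by omega), step m hm]
    refine ⟨(i + 1) * p, by positivity, ?_⟩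
    rw [← pow_add]
    exact steps (i + 1) ((i + 1) * p) (by nlinarith)
  rcases hne.lt_or_gt with h | h
  · exact key i j h hij
  · exact key j i h hij.symm

/-- A nontrivial nilpotent group has a nontrivial center. -/
private theorem exists_center_ne_one (G : Type*) [Group G] (hnil : Group.IsNilpotent G)
    [Nontrivial G] : ∃ z : G, z ∈ Subgroup.center G ∧ z ≠ 1 := by
  by_contra hc
  push_neg at hc
  have hcen : Subgroup.center G = ⊥ := by
    rw [eq_bot_iff]
    intro z hz
    simpa using hc z hz
  have hucs : ∀ n, Subgroup.upperCentralSeries G n = ⊥ := by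
    intro n
    induction n with
    | zero => exact Subgroup.upperCentralSeries_zero G
    | succ n ih =>
      rw [eq_bot_iff]
      intro x hx
      rw [mem_upperCentralSeries_succ_iff, ih] at hx
      have hmem : x ∈ Subgroup.center G := by
        rw [Subgroup.mem_center_iff]
        intro g
        have h1 : x * g * x⁻¹ * g⁻¹ = 1 := by simpa [Subgroup.mem_bot, commutatorElement_def] using hx g
        have h2 : x * g * x⁻¹ = g := by
          have := mul_eq_one_iff_eq_inv.mp h1
          rwa [inv_inv] at this
        exact (mul_inv_eq_iff_eq_mul.mp h2).symm
      rw [hcen] at hmem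
      exact hmem
  obtain ⟨n, hn⟩ := hnil.nilpotent'
  rw [hucs n] at hn
  exact (bot_ne_top (α := Subgroup G)) hn |>.elim

/-- The action of `G` on a `G`-stable additive subgroup. -/
private def subAction {G : Type u} {A : Type v} [Group G] [AddCommGroup A]
    [DistribMulAction G A] (K : AddSubgroup A) (h : ∀ (g : G) (a : A), a ∈ K → g • a ∈ K) :
    DistribMulAction G ↥K where
  smul g a := ⟨g • (a : A), h g a a.2⟩
  one_smul a := Subtype.ext (one_smul G (a : A))
  mul_smul g₁ g₂ a := Subtype.ext (mul_smul g₁ g₂ (a : A))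
  smul_zero g := Subtype.ext (smul_zero g)
  smul_add g a b := Subtype.ext (smul_add g (a : A) (b : A))

/-- The action of `G` on the quotient by a `G`-stable additive subgroup. -/
private def quotAction {G : Type u} {A : Type v} [Group G] [AddCommGroup A]
    [DistribMulAction G A] (B : AddSubgroup A) (h : ∀ (g : G) (a : A), a ∈ B → g • a ∈ B) :
    DistribMulAction G (A ⧸ B) where
  smul g x := Quotient.liftOn' x (fun a => ((g • a : A) : A ⧸ B)) (by
    intro a b hab
    have hab' : -a + b ∈ B := QuotientAddGroup.leftRel_apply.mp hab
    apply Quotient.sound'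
    apply QuotientAddGroup.leftRel_apply.mpr
    have := h g _ hab'
    rwa [smul_add, smul_neg] at this)
  one_smul x := by
    induction x using QuotientAddGroup.induction_on with
    | H a => exact congrArg _ (one_smul G a)
  mul_smul g₁ g₂ x := by
    induction x using QuotientAddGroup.induction_on with
    | H a => exact congrArg QuotientAddGroup.mk (mul_smul g₁ g₂ a)
  smul_zero g := congrArg QuotientAddGroup.mk (smul_zero g)
  smul_add g x y := by
    induction x using QuotientAddGroup.induction_on with
    | H a =>
      induction y using QuotientAddGroup.induction_on with
      | H b => exact congrArg QuotientAddGroup.mk (smul_add g a b)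

/-- The descended action of a quotient group when a subgroup acts trivially. -/
private def quotGroupAction {G : Type u} {A : Type v} [Group G] [AddCommGroup A]
    [DistribMulAction G A] (Z : Subgroup G) [Z.Normal] (h : ∀ z ∈ Z, ∀ a : A, z • a = a) :
    DistribMulAction (G ⧸ Z) A where
  smul q a := Quotient.liftOn' q (fun g => g • a) (by
    intro g₁ g₂ hg
    have hz : g₁⁻¹ * g₂ ∈ Z := QuotientGroup.leftRel_apply.mp hg
    have hg2 : g₂ = g₁ * (g₁⁻¹ * g₂) := by group
    show g₁ • a = g₂ • a
    rw [hg2, mul_smul, h _ hz a])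
  one_smul a := one_smul G a
  mul_smul q r a := by
    induction q using QuotientGroup.induction_on with
    | H x =>
      induction r using QuotientGroup.induction_on with
      | H y => exact mul_smul x y a
  smul_zero q := by
    induction q using QuotientGroup.induction_on with
    | H x => exact smul_zero x
  smul_add q a b := by
    induction q using QuotientGroup.induction_on with
    | H x => exact smul_add x a b

private theorem h1aux : ∀ (n : ℕ) (G : Type u) (A : Type v) [Group G] [Finite G]
    [AddCommGroup A] [Finite A] [DistribMulAction G A],
    Group.IsNilpotent G →
    Nat.card G + Nat.card A ≤ n →
    (∀ a : A, (∀ g : G, g • a = a) → a = 0) →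
    ∀ f : G → A, (∀ x y : G, f (x * y) = x • f y + f x) →
    ∃ a : A, ∀ x : G, f x = x • a - a := by
  intro n
  induction n using Nat.strong_induction_on with
  | _ n IH =>
  intro G A _instG _finG _addA _finA _act hnil hcard hAG f hf
  rcases subsingleton_or_nontrivial A with hA | hA
  · exact ⟨0, fun x => Subsingleton.elim _ _⟩
  have hGnt : Nontrivial G := by
    rcases subsingleton_or_nontrivial G with hG | hG
    · exfalso
      obtain ⟨a, b, hab⟩ := exists_pair_ne A
      have hz : ∀ c : A, c = 0 := fun c =>
        hAG c (fun g => by rw [Subsingleton.elim g (1 : G), one_smul])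
      exact hab (by rw [hz a, hz b])
    · exact hG
  obtain ⟨z₀, hz₀Z, hz₀ne⟩ := exists_center_ne_one G hnil
  haveI := hnil
  by_cases hZtriv : ∀ z ∈ Subgroup.center G, ∀ a : A, z • a = a
  · -- CASE Q : the center acts trivially; descend to G ⧸ center G
    set Z := Subgroup.center G with hZdef
    have hfZ : ∀ z ∈ Z, f z = 0 := by
      intro z hz
      apply hAG
      intro g
      have h1 : f (g * z) = g • f z + f g := hf g z
      have h3 : g * z = z * g := Subgroup.mem_center_iff.mp hz g
      rw [h3, hf z g, hZtriv z hz (f g)] at h1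
      have h4 := h1.symm
      rw [add_comm (f g) (f z)] at h4
      exact add_right_cancel h4
    have hconst : ∀ (g z : G), z ∈ Z → f (g * z) = f g := by
      intro g z hz
      rw [hf g z, hfZ z hz, smul_zero, zero_add]
    letI instQG : DistribMulAction (G ⧸ Z) A := quotGroupAction Z hZtriv
    have smul_mk : ∀ (g : G) (a : A), (QuotientGroup.mk g : G ⧸ Z) • a = g • a :=
      fun _ _ => rfl
    set fbar : G ⧸ Z → A := fun q => Quotient.liftOn' q f (by
      intro g₁ g₂ hg
      have hz : g₁⁻¹ * g₂ ∈ Z := QuotientGroup.leftRel_apply.mp hg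
      have hg2 : g₂ = g₁ * (g₁⁻¹ * g₂) := by group
      show f g₁ = f g₂
      rw [hg2, hconst g₁ _ hz]) with hfbar_def
    have fbar_mk : ∀ g : G, fbar (QuotientGroup.mk g) = f g := fun _ => rfl
    have hfbar : ∀ q r : G ⧸ Z, fbar (q * r) = q • fbar r + fbar q := by
      intro q r
      induction q using QuotientGroup.induction_on with
      | H x =>
        induction r using QuotientGroup.induction_on with
        | H y =>
          rw [← QuotientGroup.mk_mul, fbar_mk, fbar_mk, fbar_mk, smul_mk]
          exact hf x y
    haveI : Nontrivial ↥Z :=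
      ⟨⟨⟨z₀, hz₀Z⟩, 1, fun hc => hz₀ne (congrArg Subtype.val hc)⟩⟩
    have hquot_lt : Nat.card (G ⧸ Z) < Nat.card G := by
      have hGeq := Subgroup.card_eq_card_quotient_mul_card_subgroup Z
      have h2 : 1 < Nat.card ↥Z := Finite.one_lt_card
      have h3 : 0 < Nat.card (G ⧸ Z) := Nat.card_pos
      nlinarith
    obtain ⟨a, ha⟩ := IH (Nat.card (G ⧸ Z) + Nat.card A) (by omega) (G ⧸ Z) A
      inferInstance le_rfl
      (fun a ha' => hAG a (fun g => ha' (QuotientGroup.mk g)))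
      fbar hfbar
    exact ⟨a, fun x => ha (QuotientGroup.mk x)⟩
  · -- CASE R : some central element acts nontrivially
    push_neg at hZtriv
    obtain ⟨z, hzZ, a₀, ha₀⟩ := hZtriv
    have hcomm : ∀ g : G, g * z = z * g := Subgroup.mem_center_iff.mp hzZ
    set φ : AddMonoid.End A :=
      (DistribMulAction.toAddMonoidHom A z : AddMonoid.End A) - (AddMonoidHom.id A) with hφdef
    have hφ : ∀ a : A, φ a = z • a - a := fun a => rfl
    have hφg : ∀ (g : G) (a : A), φ (g • a) = g • φ a := by
      intro g a
      rw [hφ, hφ, smul_sub]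
      congr 1
      rw [← mul_smul, ← mul_smul, hcomm g]
    have hpow : ∀ (m : ℕ) (g : G) (a : A), (φ ^ m) (g • a) = g • (φ ^ m) a := by
      intro m
      induction m with
      | zero => intro g a; simp
      | succ m ihm =>
        intro g a
        rw [pow_succ]
        change (φ ^ m) (φ (g • a)) = g • (φ ^ m) (φ a)
        rw [hφg, ihm]
    haveI : Finite (AddMonoid.End A) := Finite.of_injective _ DFunLike.coe_injective
    obtain ⟨s, hs, hidem⟩ := exists_pow_idem φ
    set e := φ ^ s with he
    have hee : ∀ a : A, e (e a) = e a := fun a =>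
      congrArg (fun ψ : AddMonoid.End A => ψ a) hidem
    have heg : ∀ (g : G) (a : A), e (g • a) = g • e a := hpow s
    have hφe : ∀ a : A, φ a = 0 → e a = 0 := by
      intro a ha
      obtain ⟨t, rfl⟩ : ∃ t, s = t + 1 := ⟨s - 1, by omega⟩
      show (φ ^ (t + 1)) a = 0
      rw [pow_succ]
      change (φ ^ t) (φ a) = 0
      rw [ha, map_zero]
    by_cases hinj : Function.Injective (φ : A → A)
    · -- direct case: z • - has no nonzero fixed point
      have hbij := Finite.injective_iff_bijective.mp hinj
      obtain ⟨a, ha⟩ := hbij.surjective (f z)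
      refine ⟨a, fun x => ?_⟩
      apply hinj
      show φ (f x) = φ (x • a - a)
      have h1 : f (x * z) = x • f z + f x := hf x z
      rw [hcomm x, hf z x] at h1
      have h2 : φ (f x) = x • f z - f z := by
        rw [hφ, sub_eq_sub_iff_add_eq_add]
        exact h1
      rw [h2, map_sub, hφg, ha]
    · -- φ is not injective: find 0 ≠ b₀ with φ b₀ = 0
      have hker : ∃ b₀ : A, b₀ ≠ 0 ∧ φ b₀ = 0 := by
        rw [Function.not_injective_iff] at hinj
        obtain ⟨x, y, hxy, hne⟩ := hinj
        exact ⟨x - y, sub_ne_zero.mpr hne, by rw [map_sub, hxy, sub_self]⟩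
      obtain ⟨b₀, hb₀ne, hb₀⟩ := hker
      -- helper: cocycles valued in a proper stable subgroup are inner (by induction)
      have hsub : ∀ (B : AddSubgroup A), (∀ (g : G) (a : A), a ∈ B → g • a ∈ B) →
          (∃ w : A, w ∉ B) →
          ∀ (k : G → A), (∀ g, k g ∈ B) → (∀ x y : G, k (x * y) = x • k y + k x) →
          ∃ b ∈ B, ∀ x : G, k x = x • b - b := by
        rintro B hstab ⟨w, hw⟩ k hkB hk
        letI instB : DistribMulAction G ↥B := subAction B hstab
        have hcardB : Nat.card ↥B < Nat.card A := by
          have h1 : Nat.card ↥B = ((B : Set A)).ncard := (Nat.card_coe_set_eq _)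
          have h2 : (Set.univ : Set A).ncard = Nat.card A := Set.ncard_univ A
          rw [h1, ← h2]
          apply Set.ncard_lt_ncard _ Set.finite_univ
          exact ⟨Set.subset_univ _, fun hsub' => hw (hsub' (Set.mem_univ w))⟩
        obtain ⟨b, hb⟩ := IH (Nat.card G + Nat.card ↥B) (by omega) G ↥B hnil le_rfl
          (fun b hb => Subtype.ext (hAG (b : A) (fun g => congrArg Subtype.val (hb g))))
          (fun g => ⟨k g, hkB g⟩)
          (fun x y => Subtype.ext (hk x y))
        exact ⟨(b : A), b.2, fun x => congrArg Subtype.val (hb x)⟩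
      by_cases hetriv : ∀ a : A, e a = 0
      · -- φ nilpotent: use B = ker φ, quotient argument
        set B : AddSubgroup A :=
          { carrier := {a : A | φ a = 0}
            add_mem' := fun ha hb => by simp only [Set.mem_setOf_eq] at *; rw [map_add, ha, hb, add_zero]
            zero_mem' := by simp only [Set.mem_setOf_eq]; exact map_zero φ
            neg_mem' := fun ha => by simp only [Set.mem_setOf_eq] at *; rw [map_neg, ha, neg_zero] } with hBdef
        have hBmem : ∀ a : A, a ∈ B ↔ φ a = 0 := fun _ => Iff.rfl
        have hstabB : ∀ (g : G) (a : A), a ∈ B → g • a ∈ B := by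
          intro g a ha
          rw [hBmem] at *
          rw [hφg, ha, smul_zero]
        have hBa₀ : a₀ ∉ B := by
          rw [hBmem, hφ]
          exact sub_ne_zero.mpr ha₀
        have hBb₀ : b₀ ∈ B := hb₀
        letI instQ : DistribMulAction G (A ⧸ B) := quotAction B hstabB
        have mkdef : ∀ (g : G) (a : A),
            (g • (QuotientAddGroup.mk a : A ⧸ B)) = QuotientAddGroup.mk (g • a) :=
          fun _ _ => rfl
        have hAGq : ∀ x : A ⧸ B, (∀ g : G, g • x = x) → x = 0 := by
          intro x hx
          induction x using QuotientAddGroup.induction_on with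
          | H a =>
          have hk : ∀ g : G, g • a - a ∈ B := by
            intro g
            have h5 := hx g
            rw [mkdef] at h5
            have h6 : -(g • a) + a ∈ B := (QuotientAddGroup.eq).mp h5
            have h7 := B.neg_mem h6
            rwa [neg_add_rev, neg_neg, neg_add_eq_sub] at h7
          obtain ⟨b, hbB, hbb⟩ := hsub B hstabB ⟨a₀, hBa₀⟩ (fun g => g • a - a) hk
            (by intro x y; simp only [mul_smul, smul_sub]; abel)
          have hfix : ∀ g : G, g • (a - b) = a - b := by
            intro g
            rw [smul_sub, sub_eq_sub_iff_add_eq_add]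
            have h7 := sub_eq_sub_iff_add_eq_add.mp (hbb g)
            rw [h7, add_comm]
          have h8 : a - b = 0 := hAG _ hfix
          have h9 : a = b := sub_eq_zero.mp h8
          exact (QuotientAddGroup.eq_zero_iff a).mpr (h9 ▸ hbB)
        have hcardQ : Nat.card (A ⧸ B) < Nat.card A := by
          have h1 := AddSubgroup.card_eq_card_quotient_mul_card_addSubgroup B
          haveI : Nontrivial ↥B :=
            ⟨⟨⟨b₀, hBb₀⟩, 0, fun hc => hb₀ne (congrArg Subtype.val hc)⟩⟩
          have h2 : 1 < Nat.card ↥B := Finite.one_lt_card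
          have h3 : 0 < Nat.card (A ⧸ B) := Nat.card_pos
          nlinarith
        obtain ⟨abar, habar⟩ := IH (Nat.card G + Nat.card (A ⧸ B)) (by omega) G (A ⧸ B)
          hnil le_rfl hAGq (fun g => QuotientAddGroup.mk (f g))
          (by
            intro x y
            show (QuotientAddGroup.mk (f (x * y)) : A ⧸ B)
              = x • QuotientAddGroup.mk (f y) + QuotientAddGroup.mk (f x)
            rw [hf x y]; rfl)
        obtain ⟨a, rfl⟩ := QuotientAddGroup.mk_surjective abar
        have hdiff : ∀ x : G, f x - (x • a - a) ∈ B := by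
          intro x
          have h9 := habar x
          have h10 : (QuotientAddGroup.mk (f x) : A ⧸ B) = QuotientAddGroup.mk (x • a - a) := by
            rw [h9]; rfl
          have h11 := (QuotientAddGroup.eq).mp h10
          have h12 := B.neg_mem h11
          rwa [neg_add_rev, neg_neg, neg_add_eq_sub] at h12
        obtain ⟨b, hbB, hbb⟩ := hsub B hstabB ⟨a₀, hBa₀⟩ (fun x => f x - (x • a - a)) hdiff
          (by intro x y; simp only [hf x y, mul_smul, smul_sub]; abel)
        refine ⟨a + b, fun x => ?_⟩
        have h13 := hbb x
        have h14 : f x = (x • a - a) + (x • b - b) := by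
          rw [← h13]; abel
        rw [h14, smul_add]; abel
      · -- splitting case: A = ker e ⊕ fix e
        push_neg at hetriv
        obtain ⟨a₁, ha₁⟩ := hetriv
        set K : AddSubgroup A :=
          { carrier := {a : A | e a = 0}
            add_mem' := fun ha hb => by simp only [Set.mem_setOf_eq] at *; rw [map_add, ha, hb, add_zero]
            zero_mem' := by simp only [Set.mem_setOf_eq]; exact map_zero e
            neg_mem' := fun ha => by simp only [Set.mem_setOf_eq] at *; rw [map_neg, ha, neg_zero] } with hKdef
        set I : AddSubgroup A :=
          { carrier := {a : A | e a = a}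
            add_mem' := fun ha hb => by simp only [Set.mem_setOf_eq] at *; rw [map_add, ha, hb]
            zero_mem' := by simp only [Set.mem_setOf_eq]; exact map_zero e
            neg_mem' := fun ha => by simp only [Set.mem_setOf_eq] at *; rw [map_neg, ha] } with hIdef
        have hKmem : ∀ a : A, a ∈ K ↔ e a = 0 := fun _ => Iff.rfl
        have hImem : ∀ a : A, a ∈ I ↔ e a = a := fun _ => Iff.rfl
        have hstabK : ∀ (g : G) (a : A), a ∈ K → g • a ∈ K := by
          intro g a ha
          rw [hKmem] at *
          rw [heg, ha, smul_zero]
        have hstabI : ∀ (g : G) (a : A), a ∈ I → g • a ∈ I := by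
          intro g a ha
          rw [hImem] at *
          rw [heg, ha]
        have hKa₁ : a₁ ∉ K := ha₁
        have hIb₀ : b₀ ∉ I := by
          rw [hImem]
          intro hc
          exact hb₀ne (by rw [← hc, hφe b₀ hb₀])
        obtain ⟨bK, hbKK, hbK⟩ := hsub K hstabK ⟨a₁, hKa₁⟩ (fun g => f g - e (f g))
          (fun g => by rw [hKmem, map_sub, hee, sub_self])
          (by intro x y; simp only [hf x y, map_add, heg, smul_sub]; abel)
        obtain ⟨bI, hbII, hbI⟩ := hsub I hstabI ⟨b₀, hIb₀⟩ (fun g => e (f g))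
          (fun g => hee (f g))
          (by intro x y; simp only [hf x y, map_add, heg])
        refine ⟨bK + bI, fun x => ?_⟩
        have h1 := hbK x
        have h2 := hbI x
        have h3 : f x = (f x - e (f x)) + e (f x) := by abel
        rw [h3, h1, h2, smul_add]; abel

/-- For a finite nilpotent group `G` and a finite `G`-module `A` with `A^G = 0`,
`H¹(G,A) = 0`: every derivation is inner. -/
theorem h1_vanishes_finite_nilpotent {G A : Type*} [Group G] [Finite G]
    (hnil : Group.IsNilpotent G)
    [AddCommGroup A] [Finite A] [DistribMulAction G A]
    (hAG : ∀ a : A, (∀ g : G, g • a = a) → a = 0)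
    (f : G → A) (hf : ∀ x y : G, f (x * y) = x • f y + f x) :
    ∃ a : A, ∀ x : G, f x = x • a - a :=
  h1aux (Nat.card G + Nat.card A) G A hnil le_rfl hAG f hf
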